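/- The projection π_n : Σ_n → Z_n\Σ_n ≅ Σ_{n-1} from the symmetric group to the coset space by the left action of the cyclic group of order n induces on Cycl(n) := k[Σ_{n-1}] a well-defined right Σ_n-module structure; moreover, the collection Cycl = {Cycl(n)} is a right module over the operad Ass: if σ' ≡ σ'' mod Z_l (left cosets of cyclic permutations), then for any σ_i ∈ Σ_{m_i}, σ'(σ_1,...,σ_l) ≡ σ''(σ_1,...,σ_l) mod Z_{m_1+...+m_l}. -/

import Mathlib

open Equiv

/-- Auxiliary equivalence splitting off the first block of a sigma type over `Fin (l+1)`. -/
def sigmaFinSucc (l : ℕ) (m : Fin (l + 1) → ℕ) :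
    (Fin (m 0) ⊕ (Σ i : Fin l, Fin (m i.succ))) ≃ (Σ i : Fin (l + 1), Fin (m i)) where
  toFun x := Sum.elim (fun b => ⟨0, b⟩) (fun p => ⟨p.1.succ, p.2⟩) x
  invFun x := Fin.cases (motive := fun i => Fin (m i) → (Fin (m 0) ⊕ Σ i : Fin l, Fin (m i.succ)))
    (fun b => Sum.inl b) (fun i b => Sum.inr ⟨i, b⟩) x.1 x.2
  left_inv x := by rcases x with b | ⟨i, b⟩ <;> simp
  right_inv x := by
    rcases x with ⟨i, b⟩
    induction i using Fin.cases <;> simp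

/-- The lexicographic ("concatenation of blocks") equivalence
`(Σ i, Fin (m i)) ≃ Fin (∑ i, m i)`. -/
def finSigma : ∀ {l : ℕ} (m : Fin l → ℕ), (Σ i : Fin l, Fin (m i)) ≃ Fin (∑ i, m i)
  | 0, m => (Equiv.equivOfIsEmpty _ (Fin 0)).trans (finCongr (by simp))
  | l + 1, m =>
    ((sigmaFinSucc l m).symm.trans
      ((Equiv.sumCongr (Equiv.refl _) (finSigma (fun i => m i.succ))).trans
        ((finSumFinEquiv).trans (finCongr (by rw [Fin.sum_univ_succ])))))

/-- The block composition `σ(σ_1, …, σ_l) = σ(m_1, …, m_l) · (σ_1 ⊕ ⋯ ⊕ σ_l)` in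
`Σ_{m_1 + ⋯ + m_l}`: blocks of sizes `m i` are permuted according to `σ`, and the `i`-th
block is permuted internally by `τ i`. -/
def blockComp {l : ℕ} (m : Fin l → ℕ) (σ : Equiv.Perm (Fin l))
    (τ : ∀ i, Equiv.Perm (Fin (m i))) : Equiv.Perm (Fin (∑ i, m i)) :=
  ((finSigma m).symm.trans
    ((Equiv.sigmaCongr σ
        (fun i => (τ i).trans (finCongr (congrArg m (σ.symm_apply_apply i).symm)))).trans
      ((finSigma fun j => m (σ.symm j)).trans (finCongr (Equiv.sum_comp σ.symm m)))))

/-- `a` and `b` lie in the same left coset of the cyclic group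
`Z_n = ⟨(1 2 … n)⟩ ⊆ Σ_n`. -/
def cosetRel (n : ℕ) (a b : Equiv.Perm (Fin n)) : Prop :=
  ∃ z : ℕ, a = (finRotate n) ^ z * b

lemma finSigma_val : ∀ {l : ℕ} (m : Fin l → ℕ) (x : Σ i, Fin (m i)),
    ((finSigma m x : Fin _) : ℕ) = (∑ k, if k < x.1 then m k else 0) + x.2.val
  | 0, m, x => x.1.elim0
  | l + 1, m, ⟨i, b⟩ => by
    induction i using Fin.cases with
    | zero => simp [finSigma, sigmaFinSucc]
    | succ i =>
      simp [finSigma, sigmaFinSucc, finSigma_val (fun k => m k.succ) ⟨i, b⟩,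
        Fin.sum_univ_succ]
      omega

lemma blockComp_val {l : ℕ} (m : Fin l → ℕ) (σ : Equiv.Perm (Fin l))
    (τ : ∀ i, Equiv.Perm (Fin (m i))) (i : Fin l) (b : Fin (m i)) :
    ((blockComp m σ τ (finSigma m ⟨i, b⟩) : Fin _) : ℕ)
      = (∑ k, if k < σ i then m (σ.symm k) else 0) + ((τ i b : Fin (m i)) : ℕ) := by
  simp [blockComp, Equiv.sigmaCongr, finSigma_val]

lemma finRotate_pow_val (n z : ℕ) (x : Fin (n+1)) :
    ((finRotate (n+1) ^ z) x).val = (x.val + z) % (n+1) := by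
  induction z with
  | zero => simp [Nat.mod_eq_of_lt x.isLt]
  | succ z ih =>
    rw [pow_succ', Equiv.Perm.mul_apply, finRotate_succ_apply, Fin.val_add, ih, Fin.val_one',
      Nat.mod_add_mod, Nat.add_mod_mod, Nat.add_assoc]

lemma finRotate_pow_val' {n : ℕ} (h : 0 < n) (z : ℕ) (x : Fin n) :
    ((finRotate n ^ z) x).val = (x.val + z) % n := by
  cases n with
  | zero => exact absurd h (lt_irrefl 0)
  | succ n => exact finRotate_pow_val n z x

lemma rotate_sum {l : ℕ} (g : Fin (l+1) → ℕ) (j₀ : Fin (l+1)) :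
    ∑ k, (if k < finRotate (l+1) j₀ then g ((finRotate (l+1)).symm k) else 0)
      = if j₀ = Fin.last l then 0
        else (∑ k, if k < j₀ then g k else 0) + g (Fin.last l) := by
  have hre : ∑ k, (if k < finRotate (l+1) j₀ then g ((finRotate (l+1)).symm k) else 0)
      = ∑ k, (if finRotate (l+1) k < finRotate (l+1) j₀ then g k else 0) :=
    (Fintype.sum_equiv (finRotate (l+1))
      (fun k => if finRotate (l+1) k < finRotate (l+1) j₀ then g k else 0)
      (fun k => if k < finRotate (l+1) j₀ then g ((finRotate (l+1)).symm k) else 0)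
      (fun k => by rw [Equiv.symm_apply_apply])).symm
  rw [hre]
  by_cases hj : j₀ = Fin.last l
  · subst hj
    rw [if_pos rfl]
    refine Finset.sum_eq_zero fun k _ => ?_
    have hk := k.isLt
    simp only [finRotate_succ_apply, Fin.lt_def, Fin.val_add_one, Fin.ext_iff, Fin.val_last]
    split_ifs <;> omega
  · rw [if_neg hj]
    have hj3 : j₀.val ≠ l := fun h => hj (Fin.ext h)
    have hpt : ∀ k : Fin (l+1),
        (if finRotate (l+1) k < finRotate (l+1) j₀ then g k else 0)
          = (if k < j₀ then g k else 0) + (if k = Fin.last l then g k else 0) := by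
      intro k
      have hk := k.isLt
      have hj2 := j₀.isLt
      simp only [finRotate_succ_apply, Fin.lt_def, Fin.val_add_one, Fin.ext_iff, Fin.val_last]
      split_ifs <;> omega
    rw [Finset.sum_congr rfl fun k _ => hpt k, Finset.sum_add_distrib,
      Finset.sum_ite_eq' Finset.univ (Fin.last l) g]
    simp

lemma sum_lt_last {l : ℕ} (g : Fin (l+1) → ℕ) :
    (∑ k, if k < Fin.last l then g k else 0) + g (Fin.last l) = ∑ k, g k := by
  have hpt : ∀ k : Fin (l+1),
      g k = (if k < Fin.last l then g k else 0) + (if k = Fin.last l then g k else 0) := by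
    intro k
    have hk := k.isLt
    simp only [Fin.lt_def, Fin.ext_iff, Fin.val_last]
    split_ifs <;> omega
  conv_rhs => rw [Finset.sum_congr rfl fun k _ => hpt k]
  rw [Finset.sum_add_distrib, Finset.sum_ite_eq' Finset.univ (Fin.last l) g]
  simp

lemma key_step {l : ℕ} (m : Fin (l+1) → ℕ) (hm : ∀ i, 1 ≤ m i)
    (σ : Equiv.Perm (Fin (l+1))) (τ : ∀ i, Equiv.Perm (Fin (m i))) :
    blockComp m (finRotate (l+1) * σ) τ
      = finRotate (∑ i, m i) ^ (m (σ.symm (Fin.last l))) * blockComp m σ τ := by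
  obtain ⟨N, hN⟩ : ∃ N, ∑ i, m i = N + 1 := by
    have : 0 < ∑ i, m i :=
      lt_of_lt_of_le (hm 0) (Finset.single_le_sum (fun i _ => Nat.zero_le _)
        (Finset.mem_univ 0))
    exact ⟨(∑ i, m i) - 1, by omega⟩
  ext x
  obtain ⟨⟨i, b⟩, rfl⟩ := (finSigma m).surjective x
  rw [Equiv.Perm.mul_apply]
  have hlt := (blockComp m (finRotate (l+1) * σ) τ (finSigma m ⟨i, b⟩)).isLt
  have h1 := blockComp_val m (finRotate (l+1) * σ) τ i b
  have h2 := blockComp_val m σ τ i b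
  have hmul : ∀ k, (finRotate (l+1) * σ) k = finRotate (l+1) (σ k) := fun k => rfl
  have hmulsymm : ∀ k, (finRotate (l+1) * σ).symm k = σ.symm ((finRotate (l+1)).symm k) :=
    fun k => rfl
  rw [hmul i] at h1
  simp only [hmulsymm] at h1
  rw [rotate_sum (fun k => m (σ.symm k)) (σ i)] at h1
  have hrot : ∀ y : Fin (∑ i, m i),
      ((finRotate (∑ i, m i) ^ (m (σ.symm (Fin.last l)))) y).val
        = (y.val + m (σ.symm (Fin.last l))) % (∑ i, m i) := by
    intro y
    exact finRotate_pow_val' (by omega) _ y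
  rw [hrot, h1, h2]
  have hsum : ∑ k, m (σ.symm k) = ∑ i, m i := Equiv.sum_comp σ.symm m
  have htb : ((τ i b : Fin (m i)) : ℕ) < m i := (τ i b).isLt
  have hmi : m i ≤ ∑ i, m i :=
    Finset.single_le_sum (fun i _ => Nat.zero_le _) (Finset.mem_univ i)
  by_cases hj : σ i = Fin.last l
  · rw [if_pos hj] at h1 ⊢
    have hfull : (∑ k, if k < σ i then m (σ.symm k) else 0) + m (σ.symm (Fin.last l))
        = ∑ i, m i := by
      rw [hj, ← hsum]
      exact sum_lt_last fun k => m (σ.symm k)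
    have he : (∑ k, if k < σ i then m (σ.symm k) else 0) + ((τ i b : Fin (m i)) : ℕ)
        + m (σ.symm (Fin.last l)) = ((τ i b : Fin (m i)) : ℕ) + ∑ i, m i := by omega
    rw [he, Nat.add_mod_right, Nat.mod_eq_of_lt (by omega)]
    omega
  · rw [if_neg hj] at h1 ⊢
    rw [Nat.mod_eq_of_lt (by omega)]
    omega

lemma cosetRel_refl (n : ℕ) (a : Equiv.Perm (Fin n)) : cosetRel n a a :=
  ⟨0, by simp⟩

lemma blockComp_pow {l : ℕ} (m : Fin l → ℕ) (hm : ∀ i, 1 ≤ m i) (z : ℕ)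
    (σ : Equiv.Perm (Fin l)) (τ : ∀ i, Equiv.Perm (Fin (m i))) :
    cosetRel (∑ i, m i) (blockComp m (finRotate l ^ z * σ) τ) (blockComp m σ τ) := by
  induction z with
  | zero => simpa using cosetRel_refl _ _
  | succ z ih =>
    cases l with
    | zero =>
      refine ⟨0, ?_⟩
      rw [pow_zero, one_mul]
      congr 1
      exact Subsingleton.elim _ _
    | succ L =>
      obtain ⟨w, hw⟩ := ih
      refine ⟨m ((finRotate (L+1) ^ z * σ).symm (Fin.last L)) + w, ?_⟩
      rw [pow_succ', mul_assoc, key_step m hm (finRotate (L+1) ^ z * σ) τ, hw, pow_add,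
        mul_assoc]

theorem cycl_right_module_over_ass :
    (∀ n : ℕ, ∃ smul :
        Quot (cosetRel n) → Equiv.Perm (Fin n) → Quot (cosetRel n),
      (∀ σ ρ, smul (Quot.mk _ σ) ρ = Quot.mk _ (σ * ρ)) ∧
      (∀ q, smul q 1 = q) ∧
      (∀ q ρ₁ ρ₂, smul q (ρ₁ * ρ₂) = smul (smul q ρ₁) ρ₂)) ∧
    (∀ (l : ℕ) (m : Fin l → ℕ), (∀ i, 1 ≤ m i) →
      ∀ σ' σ'' : Equiv.Perm (Fin l), cosetRel l σ' σ'' →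
        ∀ τ : ∀ i, Equiv.Perm (Fin (m i)),
          cosetRel (∑ i, m i) (blockComp m σ' τ) (blockComp m σ'' τ)) := by
  constructor
  · intro n
    refine ⟨fun q ρ => Quot.lift (fun σ => Quot.mk _ (σ * ρ))
      (fun a b h => by
        obtain ⟨z, hz⟩ := h
        exact Quot.sound ⟨z, by rw [hz, mul_assoc]⟩) q,
      fun σ ρ => rfl, ?_, ?_⟩
    · intro q
      induction q using Quot.ind with
      | mk a => simp only [mul_one]
    · intro q ρ₁ ρ₂
      induction q using Quot.ind with
      | mk a => simp only [mul_assoc]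
  · rintro l m hm σ' σ'' ⟨z, hz⟩ τ
    rw [hz]
    exact blockComp_pow m hm z σ'' τ
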